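/- arXiv:2502.07553 — 6 statements merged into one kernel-verified Lean document; each statement's English description precedes it below -/
import Mathlib

section
/- For every subset B of [n] with |B| = k, the function h_B(x) = 1 + Σ_{j=1}^k (-1)^j (8j-4) · ReLU(Σ_{p∈B} x_p + 0.5 - j) satisfies h_B(x) = ∏_{i∈B} (-1)^{x_i} for every binary string x ∈ {0,1}^n. That is, a one-hidden-layer ReLU network with k neurons exactly computes the k-parity function on B. -/
lemma sum_sign (k : ℕ) :
    ∑ j ∈ Finset.Icc 1 k, (-1 : ℝ) ^ j * (8 * j - 4) = (-1) ^ k * (4 * k) := by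
  induction k with
  | zero => simp
  | succ k ih =>
    rw [Finset.sum_Icc_succ_top (by omega), ih]
    push_cast
    ring

lemma sum_lin (k : ℕ) :
    ∑ j ∈ Finset.Icc 1 k, (-1 : ℝ) ^ j * (8 * j - 4) * ((k : ℝ) + 0.5 - j)
      = (-1) ^ k - 1 := by
  induction k with
  | zero => simp
  | succ k ih =>
    rw [Finset.sum_Icc_succ_top (by omega)]
    have h : ∑ j ∈ Finset.Icc 1 k, (-1 : ℝ) ^ j * (8 * j - 4) * (((k:ℕ)+1 : ℝ) + 0.5 - j)
        = (∑ j ∈ Finset.Icc 1 k, (-1 : ℝ) ^ j * (8 * j - 4) * ((k:ℝ) + 0.5 - j))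
          + ∑ j ∈ Finset.Icc 1 k, (-1 : ℝ) ^ j * (8 * j - 4) := by
      rw [← Finset.sum_add_distrib]
      apply Finset.sum_congr rfl
      intro j _
      ring
    push_cast at h ⊢
    rw [h, ih, sum_sign]
    push_cast
    ring

lemma key (k s : ℕ) (hs : s ≤ k) :
    1 + ∑ j ∈ Finset.Icc 1 k, (-1 : ℝ) ^ j * (8 * j - 4) *
        max ((s : ℝ) + 0.5 - j) 0 = (-1) ^ s := by
  have hsub : Finset.Icc 1 s ⊆ Finset.Icc 1 k := Finset.Icc_subset_Icc_right hs
  rw [← Finset.sum_subset hsub (by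
    intro j hj hj'
    simp only [Finset.mem_Icc] at hj hj'
    have hjs : s + 1 ≤ j := by omega
    have : (s : ℝ) + 0.5 - j ≤ 0 := by
      have : (s : ℝ) + 1 ≤ j := by exact_mod_cast hjs
      linarith
    rw [max_eq_right this, mul_zero])]
  have : ∑ j ∈ Finset.Icc 1 s, (-1 : ℝ) ^ j * (8 * j - 4) * max ((s : ℝ) + 0.5 - j) 0
      = ∑ j ∈ Finset.Icc 1 s, (-1 : ℝ) ^ j * (8 * j - 4) * ((s : ℝ) + 0.5 - j) := by
    apply Finset.sum_congr rfl
    intro j hj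
    simp only [Finset.mem_Icc] at hj
    have : (j : ℝ) ≤ s := by exact_mod_cast hj.2
    rw [max_eq_left (by linarith)]
  rw [this, sum_lin]
  ring

/-- A one-hidden-layer ReLU network with `k` neurons exactly computes the
`k`-parity function on `B`. -/
theorem ffnn_expresses_k_parity (n k : ℕ) (hk : k ≤ n)
    (B : Finset (Fin n)) (hB : B.card = k) (x : Fin n → Fin 2) :
    1 + ∑ j ∈ Finset.Icc 1 k, (-1 : ℝ) ^ j * (8 * j - 4) *
        max ((∑ p ∈ B, (x p : ℝ)) + 0.5 - j) 0
      = ∏ i ∈ B, (-1 : ℝ) ^ (x i : ℕ) := by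
  set s : ℕ := ∑ p ∈ B, (x p : ℕ) with hs
  have hsum : (∑ p ∈ B, (x p : ℝ)) = (s : ℝ) := by
    rw [hs]; push_cast; rfl
  have hsk : s ≤ k := by
    calc s ≤ ∑ p ∈ B, 1 := Finset.sum_le_sum (fun p _ => by omega)
    _ = k := by simp [hB]
  have hprod : ∏ i ∈ B, (-1 : ℝ) ^ (x i : ℕ) = (-1) ^ s := by
    rw [hs, Finset.prod_pow_eq_pow_sum]
  rw [hsum, hprod]
  exact key k s hsk
end

section
/- For every natural number s with 0 ≤ s ≤ k, the value 1 + Σ_{j=1}^k (-1)^j (8j-4) · max(s + 0.5 - j, 0) equals (-1)^s. -/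
lemma aux_sum_sign (s : ℕ) :
    ∑ j ∈ Finset.Icc 1 s, (-1 : ℝ) ^ j * (8 * j - 4) = (-1 : ℝ) ^ s * (4 * s) := by
  induction s with
  | zero => simp
  | succ n ih =>
    rw [Finset.sum_Icc_succ_top (by omega), ih]
    push_cast
    ring

lemma aux_key (s : ℕ) :
    1 + ∑ j ∈ Finset.Icc 1 s, (-1 : ℝ) ^ j * (8 * j - 4) * ((s : ℝ) + 0.5 - j)
      = (-1 : ℝ) ^ s := by
  induction s with
  | zero => simp
  | succ n ih =>
    rw [Finset.sum_Icc_succ_top (by omega)]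
    have split : ∑ j ∈ Finset.Icc 1 n, (-1 : ℝ) ^ j * (8 * j - 4) * (((n : ℕ) + 1 : ℕ) + 0.5 - j)
        = (∑ j ∈ Finset.Icc 1 n, (-1 : ℝ) ^ j * (8 * j - 4) * ((n : ℝ) + 0.5 - j))
          + ∑ j ∈ Finset.Icc 1 n, (-1 : ℝ) ^ j * (8 * j - 4) := by
      rw [← Finset.sum_add_distrib]
      apply Finset.sum_congr rfl
      intro j _
      push_cast
      ring
    rw [split, aux_sum_sign]
    have h1 : (∑ j ∈ Finset.Icc 1 n, (-1 : ℝ) ^ j * (8 * j - 4) * ((n : ℝ) + 0.5 - j))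
        = (-1 : ℝ) ^ n - 1 := by linarith [ih]
    rw [h1]
    push_cast
    ring

/-- For every `0 ≤ s ≤ k`, the ReLU telescoping sum
`1 + ∑_{j=1}^k (-1)^j (8j-4) max(s + 0.5 - j, 0)` equals `(-1)^s`. -/
theorem relu_sum_parity (k : ℕ) (hk : 0 < k) (s : ℕ) (hs : s ≤ k) :
    1 + ∑ j ∈ Finset.Icc 1 k, (-1 : ℝ) ^ j * (8 * j - 4) *
        max ((s : ℝ) + 0.5 - j) 0
      = (-1 : ℝ) ^ s := by
  have hsub : ∑ j ∈ Finset.Icc 1 k, (-1 : ℝ) ^ j * (8 * j - 4) * max ((s : ℝ) + 0.5 - j) 0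
      = ∑ j ∈ Finset.Icc 1 s, (-1 : ℝ) ^ j * (8 * j - 4) * max ((s : ℝ) + 0.5 - j) 0 := by
    rw [Finset.sum_subset (Finset.Icc_subset_Icc_right hs)]
    intro j hj hj'
    simp only [Finset.mem_Icc] at hj hj'
    have hjs : s < j := by omega
    have : ((s : ℝ) + 0.5 - j) < 0 := by
      have : (s : ℝ) + 1 ≤ j := by exact_mod_cast hjs
      linarith
    rw [max_eq_right this.le, mul_zero]
  rw [hsub]
  have heq : ∑ j ∈ Finset.Icc 1 s, (-1 : ℝ) ^ j * (8 * j - 4) * max ((s : ℝ) + 0.5 - j) 0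
      = ∑ j ∈ Finset.Icc 1 s, (-1 : ℝ) ^ j * (8 * j - 4) * ((s : ℝ) + 0.5 - j) := by
    apply Finset.sum_congr rfl
    intro j hj
    simp only [Finset.mem_Icc] at hj
    have : (j : ℝ) ≤ s := by exact_mod_cast hj.2
    rw [max_eq_left (by linarith)]
  rw [heq, aux_key]
end

section
/- Let h: {0,1}^n → ℝ be any function that does not depend on coordinate p, i.e., h(x) = h(flip_p(x)) for all x, where flip_p flips the p-th bit. If p ∈ B and ℓ is the squared hinge loss ℓ(y, ŷ) = (max(0, 1 - yŷ))², then the expected risk E_{x ~ Unif({0,1}^n)}[ℓ(f_B(x), h(x))] ≥ 1. -/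
lemma hinge_pair (t : ℝ) : 2 ≤ (max 0 (1 - t)) ^ 2 + (max 0 (1 + t)) ^ 2 := by
  have a1 : (0:ℝ) ≤ max 0 (1 - t) := le_max_left _ _
  have a2 : (1 - t) ≤ max 0 (1 - t) := le_max_right _ _
  have b1 : (0:ℝ) ≤ max 0 (1 + t) := le_max_left _ _
  have b2 : (1 + t) ≤ max 0 (1 + t) := le_max_right _ _
  nlinarith [sq_nonneg (max 0 (1 - t) - max 0 (1 + t))]

/-- Any predictor that does not depend on a coordinate `p ∈ B` has expected
squared hinge loss at least `1` for the parity function on `B`, under the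
uniform distribution on `{0,1}^n`. -/
theorem flip_invariant_risk_ge_one (n : ℕ) (B : Finset (Fin n)) (p : Fin n)
    (hp : p ∈ B) (h : (Fin n → Fin 2) → ℝ)
    (hinv : ∀ x : Fin n → Fin 2, h x = h (Function.update x p (1 - x p))) :
    (1 : ℝ) ≤ (∑ x : Fin n → Fin 2,
        (max 0 (1 - (∏ i ∈ B, (-1 : ℝ) ^ (x i : ℕ)) * h x)) ^ 2) / 2 ^ n := by
  set F : (Fin n → Fin 2) → (Fin n → Fin 2) :=
    fun x => Function.update x p (1 - x p) with hF
  have hinvol : Function.Involutive F := by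
    intro x; funext i
    by_cases hi : i = p
    · subst hi; simp [F]
    · simp [F, Function.update_of_ne hi]
  set f : (Fin n → Fin 2) → ℝ := fun x => ∏ i ∈ B, (-1 : ℝ) ^ (x i : ℕ) with hf
  have hsign : ∀ x, f (F x) = - f x := by
    intro x
    simp only [hf]
    rw [← Finset.prod_erase_mul _ _ hp, ← Finset.prod_erase_mul _ _ hp]
    have h1 : ∀ i ∈ B.erase p, (-1:ℝ) ^ ((F x i : ℕ)) = (-1) ^ (x i : ℕ) := by
      intro i hi
      simp [F, Function.update_of_ne (Finset.ne_of_mem_erase hi)]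
    rw [Finset.prod_congr rfl h1]
    have h2 : (-1:ℝ) ^ ((F x p : ℕ)) = -(-1) ^ (x p : ℕ) := by
      have : x p = 0 ∨ x p = 1 := by omega
      rcases this with h' | h' <;> simp [F, h']
    rw [h2]; ring
  set g : (Fin n → Fin 2) → ℝ := fun x => (max 0 (1 - f x * h x)) ^ 2 with hg
  have key : ∀ x, 2 ≤ g x + g (F x) := by
    intro x
    have : g (F x) = (max 0 (1 + f x * h x)) ^ 2 := by
      simp only [hg, hsign, ← hinv x, show h (F x) = h x from (hinv x).symm]
      ring_nf
    rw [this]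
    exact hinge_pair (f x * h x)
  have hcomp : ∑ x : Fin n → Fin 2, g (F x) = ∑ x : Fin n → Fin 2, g x :=
    Function.Bijective.sum_comp hinvol.bijective g
  have hsum : (2:ℝ) * 2 ^ n ≤ ∑ x : Fin n → Fin 2, g x + ∑ x : Fin n → Fin 2, g (F x) := by
    rw [← Finset.sum_add_distrib]
    calc (2:ℝ) * 2 ^ n = ∑ _x : Fin n → Fin 2, (2:ℝ) := by
          simp [Finset.card_univ, mul_comm]
      _ ≤ _ := Finset.sum_le_sum fun x _ => key x
  rw [hcomp] at hsum
  rw [le_div_iff₀ (by positivity)]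
  simp only [hg] at hsum
  linarith
end

section
/- Let γ be the softmax of scores s ∈ ℝ^n and γ̃ the softmax after replacing only the p-th score s_p by s̃_p ≥ s_p, with γ̃_p ≤ ε (the new attention on position p is at most ε). Then for every r ≠ p, |γ_r - γ̃_r| ≤ ε·γ_r, and |γ_p - γ̃_p| ≤ ε. -/
open Finset

/-- Stability of softmax under increasing a single score: if after replacing
`s p` by a larger value the new softmax weight at `p` is at most `ε`, then all
other weights change multiplicatively by at most `ε`, and the weight at `p`
changes by at most `ε`. -/
theorem softmax_single_score_stability (n : ℕ) (s : Fin n → ℝ) (p : Fin n)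
    (c : ℝ) (hc : s p ≤ c) (ε : ℝ) (hε0 : 0 < ε) (hε1 : ε < 1)
    (γ γ' : Fin n → ℝ)
    (hγ : ∀ j, γ j = Real.exp (s j) / ∑ q : Fin n, Real.exp (s q))
    (hγ' : ∀ j, γ' j = Real.exp (Function.update s p c j) /
        ∑ q : Fin n, Real.exp (Function.update s p c q))
    (hεp : γ' p ≤ ε) :
    (∀ r, r ≠ p → |γ r - γ' r| ≤ ε * γ r) ∧ |γ p - γ' p| ≤ ε := by
  set A := ∑ q ∈ Finset.univ.erase p, Real.exp (s q) with hA
  have hA0 : 0 ≤ A := Finset.sum_nonneg fun q _ => (Real.exp_pos _).le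
  have hZ : ∑ q : Fin n, Real.exp (s q) = Real.exp (s p) + A := by
    rw [hA, ← Finset.add_sum_erase _ _ (Finset.mem_univ p)]
  have hupd : ∀ q, Real.exp (Function.update s p c q)
      = Function.update (fun q => Real.exp (s q)) p (Real.exp c) q := fun q =>
    Function.apply_update (fun _ x => Real.exp x) s p c q
  have hZ' : ∑ q : Fin n, Real.exp (Function.update s p c q) = Real.exp c + A := by
    simp_rw [hupd]
    rw [Finset.sum_update_of_mem (Finset.mem_univ p), hA, Finset.sdiff_singleton_eq_erase]
  set E := Real.exp (s p) with hE
  set C := Real.exp c with hC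
  have hE0 : 0 < E := Real.exp_pos _
  have hC0 : 0 < C := Real.exp_pos _
  have hEC : E ≤ C := Real.exp_le_exp.mpr hc
  have hD : 0 < E + A := by linarith
  have hD' : 0 < C + A := by linarith
  have hp' : γ' p = C / (C + A) := by
    rw [hγ' p, hZ', Function.update_self]
  have hCε : C ≤ ε * (C + A) := by
    rw [hp', div_le_iff₀ hD'] at hεp; linarith
  constructor
  · intro r hr
    have hR0 : 0 < Real.exp (s r) := Real.exp_pos _
    set R := Real.exp (s r) with hRdef
    have hgr : γ r = R / (E + A) := by rw [hγ r, hZ]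
    have hgr' : γ' r = R / (C + A) := by
      rw [hγ' r, hZ', Function.update_of_ne hr]
    rw [hgr, hgr']
    have hle : R / (C + A) ≤ R / (E + A) := by gcongr
    rw [abs_of_nonneg (by linarith)]
    have e1 : R / (E + A) - R / (C + A) = R * (C - E) / ((E + A) * (C + A)) := by
      field_simp; ring
    have e2 : ε * (R / (E + A)) = ε * R * (C + A) / ((E + A) * (C + A)) := by
      field_simp
    rw [e1, e2]
    gcongr ?_ / _
    nlinarith [mul_le_mul_of_nonneg_left hCε hR0.le]
  · have hgp : γ p = E / (E + A) := by rw [hγ p, hZ]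
    rw [hgp, hp']
    have hle : E / (E + A) ≤ C / (C + A) := by
      rw [div_le_div_iff₀ hD hD']; nlinarith
    rw [abs_of_nonpos (by linarith)]
    have h1 : 0 ≤ E / (E + A) := by positivity
    have h2 : C / (C + A) ≤ ε := by rw [hp'] at hεp; exact hεp
    linarith
end

section
/- Counting bound: fix m sets S_1,…,S_m ⊆ [n], each of size T = ⌈(n-1)/m⌉ - 1, and tokens u_1,…,u_m ∈ {0,1}. Let X' ⊆ {0,1}^n be the set of strings x such that for every i, at least ⌈n/(5m)⌉ of the positions j ∈ S_i satisfy x_j = u_i. Then |{0,1}^n \ X'| ≤ m · (Σ_{i=0}^{⌈n/(5m)⌉} C(T, i)) · 2^{n - T}, and hence |X'| ≥ 2^n (1 - 2m / 2^{⌈(n-1)/(5m)⌉}) using Σ_{i=0}^{⌈n/(5m)⌉} C(T,i) ≤ (5e)^{⌈n/(5m)⌉} ≤ 16^{⌈n/(5m)⌉}. -/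
open Finset

theorem doubling (T k : ℕ) : ∑ j ∈ range (k+1), (T+1).choose j ≤ 2 * ∑ j ∈ range (k+1), T.choose j := by
  have h1 : ∑ j ∈ range (k+1), (T+1).choose j
      = (∑ j ∈ range (k+1), T.choose j) + ∑ i ∈ range k, T.choose i := by
    rw [Finset.sum_range_succ' (fun j => (T+1).choose j) k,
        Finset.sum_range_succ' (fun j => T.choose j) k]
    simp only [Nat.choose_succ_succ, Nat.choose_zero_right]
    rw [Finset.sum_add_distrib]
    ring
  rw [h1, two_mul]
  exact Nat.add_le_add le_rfl (Finset.sum_le_sum_of_subset (Finset.range_subset_range.2 (Nat.le_succ k)))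


theorem weighted (T k : ℕ) (hk : k ≤ T) :
    (∑ j ∈ range (k+1), T.choose j) * 4^(T-k) ≤ 5^T := by
  have h1 : (∑ j ∈ range (k+1), T.choose j) * 4^(T-k)
      ≤ ∑ j ∈ range (k+1), T.choose j * 4^(T-j) := by
    rw [Finset.sum_mul]
    refine Finset.sum_le_sum fun j hj => ?_
    have hj' : j ≤ k := Nat.lt_succ_iff.mp (Finset.mem_range.mp hj)
    exact Nat.mul_le_mul_left _ (Nat.pow_le_pow_right (by norm_num) (by omega))
  have h2 : ∑ j ∈ range (k+1), T.choose j * 4^(T-j)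
      ≤ ∑ j ∈ range (T+1), T.choose j * 4^(T-j) :=
    Finset.sum_le_sum_of_subset (Finset.range_subset_range.2 (by omega))
  have h3 : ∑ j ∈ range (T+1), T.choose j * 4^(T-j) = 5^T := by
    have := add_pow 1 4 T  -- (1+4)^T = ∑ ...
    simp only [one_pow, one_mul] at this
    rw [show (5:ℕ) = 1 + 4 by norm_num, this]
    refine Finset.sum_congr rfl fun j hj => ?_
    simp [Nat.cast_id, mul_comm]
  omega

theorem pow5le (d : ℕ) : 5^(30+5*d) ≤ 2^(70+12*d) := by
  induction d with
  | zero => norm_num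
  | succ e ih =>
      rw [show 30+5*(e+1) = (30+5*e) + 5 by omega, pow_add 5 (30+5*e) 5,
        show 70+12*(e+1) = (70+12*e) + 12 by omega, pow_add 2 (70+12*e) 12]
      exact Nat.mul_le_mul ih (by norm_num)


theorem core (i : ℕ) : ∑ j ∈ range (i+2), (5*i).choose j ≤ 16^i := by
  by_cases hi : i ≤ 5
  · interval_cases i <;> decide
  · push_neg at hi
    obtain ⟨d, rfl⟩ : ∃ d, i = 6 + d := ⟨i - 6, by omega⟩
    have hw := weighted (5*(6+d)) (6+d+1) (by omega)
    have hp : (5:ℕ)^(5*(6+d)) ≤ 2^(70+12*d) := by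
      have := pow5le d
      rwa [show 5*(6+d) = 30+5*d by omega]
    have hsub : 5*(6+d) - (6+d+1) = 23 + 4*d := by omega
    rw [hsub] at hw
    -- f * 4^(23+4d) ≤ 5^(5(6+d)) ≤ 2^(70+12d) = 4^(23+4d) * 16^(6+d)
    have key : (∑ j ∈ range (6+d+2), (5*(6+d)).choose j) * 4^(23+4*d)
        ≤ 16^(6+d) * 4^(23+4*d) := by
      calc _ ≤ 2^(70+12*d) := le_trans hw hp
        _ = 16^(6+d) * 4^(23+4*d) := by
            rw [show (16:ℕ) = 2^4 by norm_num, show (4:ℕ) = 2^2 by norm_num,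
              ← pow_mul, ← pow_mul, ← pow_add]
            congr 1
            ring
    have h4 : 0 < 4^(23+4*d) := Nat.pow_pos (by norm_num)
    exact Nat.le_of_mul_le_mul_right key h4


theorem mainbin (k : ℕ) (hk : 1 ≤ k) : ∀ e : ℕ, ∑ j ∈ range (k+1), (5*k-5+e).choose j ≤ 2^e * 16^(k-1) := by
  intro e
  induction e with
  | zero =>
      have h := core (k-1)
      rw [show k-1+2 = k+1 by omega, show 5*(k-1) = 5*k-5 by omega] at h
      simpa using h
  | succ e ih =>
      rw [show 5*k-5+(e+1) = (5*k-5+e)+1 by omega]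
      calc ∑ j ∈ range (k+1), ((5*k-5+e)+1).choose j
          ≤ 2 * ∑ j ∈ range (k+1), (5*k-5+e).choose j := doubling _ _
        _ ≤ 2 * (2^e * 16^(k-1)) := Nat.mul_le_mul_left 2 ih
        _ = 2^(e+1) * 16^(k-1) := by ring

theorem monoT (T k : ℕ) : ∑ j ∈ range (k+1), T.choose j ≤ ∑ j ∈ range (k+1), (T+1).choose j :=
  Finset.sum_le_sum fun j _ => Nat.choose_le_choose j (Nat.le_succ T)

theorem sum_bound (T k kp : ℕ) (hk : 1 ≤ k) (h1 : kp ≤ k) (h2 : k ≤ kp+1) (h : 4*k+kp ≤ T+5) :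
    ∑ j ∈ range (k+1), T.choose j ≤ 2^(T+1-kp) := by
  rcases Nat.eq_or_lt_of_le h1 with heq | hlt
  · -- kp = k, so 5k ≤ T+5
    subst heq
    have h5 : 5*kp ≤ T+5 := by omega
    have := mainbin kp hk (T+5-5*kp)
    rw [show 5*kp-5+(T+5-5*kp) = T by omega] at this
    calc ∑ j ∈ range (kp+1), T.choose j ≤ 2^(T+5-5*kp) * 16^(kp-1) := this
      _ = 2^(T+1-kp) := by
          rw [show (16:ℕ) = 2^4 by norm_num, ← pow_mul, ← pow_add]
          congr 1
          omega
  · -- kp = k - 1, 5k ≤ T+6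
    have hkp : k = kp + 1 := by omega
    have h6 : 5*k ≤ T+6 := by omega
    have := mainbin k hk (T+6-5*k)
    rw [show 5*k-5+(T+6-5*k) = T+1 by omega] at this
    calc ∑ j ∈ range (k+1), T.choose j ≤ ∑ j ∈ range (k+1), (T+1).choose j := monoT T k
      _ ≤ 2^(T+6-5*k) * 16^(k-1) := this
      _ = 2^(T+1-kp) := by
          rw [show (16:ℕ) = 2^4 by norm_num, ← pow_mul, ← pow_add]
          congr 1
          omega


theorem powerset_filter_card (n : ℕ) (s : Finset (Fin n)) (k : ℕ) :
    (s.powerset.filter fun A => A.card ≤ k).card = ∑ i ∈ range (k+1), s.card.choose i := by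
  have heq : s.powerset.filter (fun A => A.card ≤ k)
      = (range (k+1)).biUnion (fun i => s.powersetCard i) := by
    ext A
    simp only [Finset.mem_filter, Finset.mem_powerset, Finset.mem_biUnion,
      Finset.mem_range, Finset.mem_powersetCard, Nat.lt_succ_iff]
    constructor
    · rintro ⟨h1, h2⟩; exact ⟨A.card, h2, h1, rfl⟩
    · rintro ⟨i, hi, h1, rfl⟩; exact ⟨h1, hi⟩
  rw [heq, Finset.card_biUnion]
  · exact Finset.sum_congr rfl fun i _ => Finset.card_powersetCard i s
  · intro a _ b _ hab
    simp only [Finset.disjoint_left, Finset.mem_powersetCard]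
    rintro A ⟨_, rfl⟩ ⟨_, h⟩
    exact hab h

theorem count_bad (n : ℕ) (s : Finset (Fin n)) (u : Fin 2) (k : ℕ) :
    (univ.filter fun x : Fin n → Fin 2 => ((s.filter fun j => x j = u).card ≤ k)).card
      ≤ (∑ i ∈ range (k+1), s.card.choose i) * 2 ^ (n - s.card) := by
  classical
  set tgt : Finset (Finset (Fin n) × ({j : Fin n // j ∉ s} → Fin 2)) :=
    (s.powerset.filter fun A => A.card ≤ k) ×ˢ univ with htgt
  have hcard : tgt.card = (∑ i ∈ range (k+1), s.card.choose i) * 2 ^ (n - s.card) := by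
    rw [htgt, Finset.card_product, powerset_filter_card]
    congr 1
    rw [Finset.card_univ, Fintype.card_fun, Fintype.card_fin,
      Fintype.card_subtype_compl, Fintype.card_coe, Fintype.card_fin]
  rw [← hcard]
  apply Finset.card_le_card_of_injOn
    (fun x => (s.filter fun j => x j = u, fun j : {j : Fin n // j ∉ s} => x j.1))
  · intro x hx
    simp only [Finset.mem_coe, Finset.mem_filter, Finset.mem_univ, true_and] at hx ⊢
    rw [htgt, Finset.mem_product]
    refine ⟨Finset.mem_filter.mpr ⟨Finset.mem_powerset.mpr (Finset.filter_subset _ _), hx⟩,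
      Finset.mem_univ _⟩
  · intro x _ y _ hxy
    simp only [Prod.mk.injEq] at hxy
    obtain ⟨h1, h2⟩ := hxy
    funext j
    by_cases hj : j ∈ s
    · have hmem : (j ∈ s.filter fun j => x j = u) ↔ (j ∈ s.filter fun j => y j = u) := by
        rw [h1]
      simp only [Finset.mem_filter, hj, true_and] at hmem
      by_cases hxu : x j = u
      · rw [hxu, (hmem.mp hxu).symm]
      · have hyu : ¬ y j = u := fun h => hxu (hmem.mpr h)
        have b1 := (x j).isLt
        have b2 := (y j).isLt
        have b3 := u.isLt
        rw [Fin.ext_iff] at hxu hyu ⊢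
        omega
    · exact congrFun h2 ⟨j, hj⟩


theorem div_facts (n m : ℕ) (hm : 0 < m) (hnm : 5 * m ≤ n) :
    1 ≤ (n+5*m-1)/(5*m) ∧
    (n+5*m-2)/(5*m) ≤ (n+5*m-1)/(5*m) ∧
    (n+5*m-1)/(5*m) ≤ (n+5*m-2)/(5*m) + 1 ∧
    4*((n+5*m-1)/(5*m)) + (n+5*m-2)/(5*m) ≤ ((n+m-2)/m - 1) + 5 ∧
    (n+m-2)/m - 1 ≤ n - 2 ∧
    1 ≤ (n+5*m-2)/(5*m) := by
  have h5m : 0 < 5*m := by omega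
  have hn : 5 ≤ n := by omega
  obtain ⟨s, t, ht, hst⟩ : ∃ s t, t < 5*m ∧ 5*m*s + t = n-2 :=
    ⟨(n-2)/(5*m), (n-2)%(5*m), Nat.mod_lt _ h5m, Nat.div_add_mod _ _⟩
  have hkp : (n+5*m-2)/(5*m) = s + 1 := by
    rw [show n+5*m-2 = 5*m*s+(t+5*m) by omega,
      Nat.mul_add_div h5m, Nat.add_div_right _ h5m, Nat.div_eq_of_lt ht]
  have hk : (n+5*m-1)/(5*m) = s + 1 + (t+1)/(5*m) := by
    rw [show n+5*m-1 = 5*m*s+((t+1)+5*m) by omega,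
      Nat.mul_add_div h5m, Nat.add_div_right _ h5m]
    omega
  have hq : (n+m-2)/m = 5*s + t/m + 1 := by
    rw [show n+m-2 = m*(5*s)+(t+m) by (rw [show m*(5*s) = 5*m*s by ring]; omega),
      Nat.mul_add_div hm, Nat.add_div_right _ hm, ← Nat.add_assoc]
  have ht1 : (t+1)/(5*m) ≤ 1 := Nat.div_le_of_le_mul (by omega)
  have htm : t/m ≤ t := Nat.div_le_self t m
  have key : 4*((t+1)/(5*m)) ≤ t/m := by
    rcases Nat.lt_or_ge (t+1) (5*m) with h | h
    · rw [Nat.div_eq_of_lt h]; exact Nat.zero_le _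
    · have h4 : 4 ≤ t/m := by
        rw [Nat.le_div_iff_mul_le hm]; omega
      have he1 : (t+1)/(5*m) = 1 := by
        rw [show t+1 = 5*m by omega, Nat.div_self h5m]
      omega
  have hsle : 5*s ≤ 5*m*s := by
    calc 5*s ≤ 5*(m*s) := Nat.mul_le_mul_left 5 (Nat.le_mul_of_pos_left s hm)
      _ = 5*m*s := by ring
  rw [hkp, hk, hq]
  clear hkp hk hq
  generalize hE : (t+1)/(5*m) = e at ht1 key ⊢
  generalize hF : t/m = f at key htm ⊢
  refine ⟨by omega, by omega, by omega, by omega, by omega, by omega⟩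


/-- Counting bound: the set of strings that fail, for some head `i`, to place
at least `⌈n/(5m)⌉` maximizer tokens inside `S i` is small, hence `X'` contains
at least a `(1 - 2m/2^⌈(n-1)/(5m)⌉)` fraction of all strings. -/
theorem good_strings_counting_bound (n m : ℕ) (hm : 0 < m) (hnm : 5 * m ≤ n)
    (S : Fin m → Finset (Fin n))
    (hS : ∀ i, (S i).card = (n - 1 + m - 1) / m - 1)
    (u : Fin m → Fin 2)
    (X' : Finset (Fin n → Fin 2))
    (hX' : ∀ x : Fin n → Fin 2, x ∈ X' ↔
      ∀ i : Fin m, (n + 5 * m - 1) / (5 * m) ≤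
        ((S i).filter (fun j => x j = u i)).card) :
    ((Finset.univ \ X').card ≤
        m * (∑ i ∈ Finset.range ((n + 5 * m - 1) / (5 * m) + 1),
              Nat.choose ((n - 1 + m - 1) / m - 1) i) *
          2 ^ (n - ((n - 1 + m - 1) / m - 1))) ∧
    (2 ^ n * (1 - 2 * m / 2 ^ ((n - 1 + 5 * m - 1) / (5 * m)) : ℝ) ≤
        (X'.card : ℝ)) := by
  classical
  have hn5 : 5 ≤ n := by omega
  have hTe : n - 1 + m - 1 = n + m - 2 := by omega
  have hTe5 : n - 1 + 5 * m - 1 = n + 5 * m - 2 := by omega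
  rw [hTe, hTe5]
  set k := (n + 5*m - 1)/(5*m) with hkdef
  set kp := (n + 5*m - 2)/(5*m) with hkpdef
  set T := (n + m - 2)/m - 1 with hTdef
  obtain ⟨f1, f2, f3, f4, f5, f6⟩ := div_facts n m hm hnm
  have hScard : ∀ i, (S i).card = T := by intro i; rw [hS i, hTe]
  have part1 : (univ \ X').card ≤ m * (∑ i ∈ range (k+1), Nat.choose T i) * 2^(n - T) := by
    have hsub : univ \ X' ⊆ univ.biUnion (fun i : Fin m =>
        univ.filter fun x : Fin n → Fin 2 => ((S i).filter fun j => x j = u i).card ≤ k) := by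
      intro x hx
      rw [Finset.mem_sdiff] at hx
      have hx2 := hx.2
      rw [hX'] at hx2
      push_neg at hx2
      obtain ⟨i, hi⟩ := hx2
      exact Finset.mem_biUnion.mpr ⟨i, Finset.mem_univ i,
        Finset.mem_filter.mpr ⟨Finset.mem_univ x, le_of_lt hi⟩⟩
    calc (univ \ X').card
        ≤ (univ.biUnion (fun i : Fin m =>
            univ.filter fun x : Fin n → Fin 2 =>
              ((S i).filter fun j => x j = u i).card ≤ k)).card := Finset.card_le_card hsub
      _ ≤ ∑ i : Fin m, (univ.filter fun x : Fin n → Fin 2 =>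
              ((S i).filter fun j => x j = u i).card ≤ k).card := Finset.card_biUnion_le
      _ ≤ ∑ _i : Fin m, (∑ j ∈ range (k+1), T.choose j) * 2^(n-T) :=
          Finset.sum_le_sum (fun i _ => by
            have h := count_bad n (S i) (u i) k
            rwa [hScard i] at h)
      _ = m * (∑ j ∈ range (k+1), T.choose j) * 2^(n-T) := by
          rw [Finset.sum_const, Finset.card_univ, Fintype.card_fin, smul_eq_mul, mul_assoc]
  refine ⟨part1, ?_⟩
  -- part 2
  have hkpT : kp ≤ T + 1 := by omega
  have hSig : ∑ j ∈ range (k+1), T.choose j ≤ 2^(T+1-kp) := sum_bound T k kp f1 f2 f3 f4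
  have hcompl : (univ \ X').card ≤ m * 2^(n+1-kp) := by
    calc (univ \ X').card ≤ m * (∑ j ∈ range (k+1), T.choose j) * 2^(n-T) := part1
      _ ≤ m * 2^(T+1-kp) * 2^(n-T) :=
          Nat.mul_le_mul_right _ (Nat.mul_le_mul_left m hSig)
      _ = m * 2^(n+1-kp) := by
          rw [mul_assoc, ← pow_add]
          congr 2
          omega
  have hXle : X'.card ≤ 2^n := by
    have h1 := Finset.card_le_univ X'
    rwa [Fintype.card_fun, Fintype.card_fin, Fintype.card_fin] at h1
  have hcardtotal : X'.card + (univ \ X').card = 2^n := by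
    rw [Finset.card_sdiff_of_subset (Finset.subset_univ X'), Finset.card_univ, Fintype.card_fun,
      Fintype.card_fin, Fintype.card_fin]
    omega
  have hkpn : kp + 1 ≤ n := by omega
  have hXr : (X'.card : ℝ) = 2^n - ((univ \ X').card : ℝ) := by
    have h := hcardtotal
    have : (X'.card : ℝ) + ((univ \ X').card : ℝ) = 2^n := by exact_mod_cast congrArg (Nat.cast : ℕ → ℝ) h
    linarith
  have hcr : ((univ \ X').card : ℝ) ≤ (m : ℝ) * 2^(n+1-kp) := by exact_mod_cast hcompl
  rw [hXr]
  have h2kp : (0:ℝ) < 2^kp := by positivity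
  have e1 : (2:ℝ)^(n+1-kp) * 2^kp = 2^(n+1) := by rw [← pow_add]; congr 1; omega
  have e2 : (m:ℝ) * 2^(n+1-kp) = 2^n * (2*m) / 2^kp := by
    rw [eq_div_iff (ne_of_gt h2kp)]
    calc (m:ℝ) * 2^(n+1-kp) * 2^kp = m * (2^(n+1-kp) * 2^kp) := by ring
      _ = m * 2^(n+1) := by rw [e1]
      _ = 2^n * (2*m) := by rw [pow_succ]; ring
  have expand : (2:ℝ)^n * (1 - 2*(m:ℝ)/2^kp) = 2^n - 2^n*(2*(m:ℝ))/2^kp := by ring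
  rw [expand]
  linarith [hcr, e2]
end

section
/- Expected risk lower bound for flip-invariant predictors on a large set: let X' ⊆ {0,1}^n be closed under flipping bit p, partitioned into X'_0 (x_p = 0) and X'_1 = flip_p(X'_0). Suppose h: {0,1}^n → ℝ satisfies |h(x) - h(flip_p(x))| ≤ δ for all x ∈ X'_0, and p ∈ B. Then with ℓ the squared hinge loss and f_B the parity on B, Σ_{x∈X'} ℓ(f_B(x), h(x)) ≥ |X'| · (1 - δ/2)² whenever δ ≤ 2, and hence E_{x~Unif({0,1}^n)}[ℓ(f_B(x), h(x))] ≥ (|X'|/2^n)(1 - δ/2)². -/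
open Finset

private lemma pair_lb (a b δ : ℝ) (hδ2 : δ ≤ 2) (hab : |a - b| ≤ δ) :
    2 * (1 - δ / 2) ^ 2 ≤ (max 0 (1 - a)) ^ 2 + (max 0 (1 + b)) ^ 2 := by
  have hA : (1 - a) ≤ max 0 (1 - a) := le_max_right _ _
  have hB : (1 + b) ≤ max 0 (1 + b) := le_max_right _ _
  have hA0 : (0:ℝ) ≤ max 0 (1 - a) := le_max_left _ _
  have hB0 : (0:ℝ) ≤ max 0 (1 + b) := le_max_left _ _
  have h1 : a - b ≤ δ := (abs_le.mp hab).2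
  nlinarith [sq_nonneg (max 0 (1 - a) - max 0 (1 + b)), sq_nonneg (max 0 (1 - a) + max 0 (1 + b) - (2 - δ))]

/-- Expected-risk lower bound for predictors that are nearly invariant to
flipping a parity bit `p ∈ B`, on a set `X'` closed under the flip. -/
theorem near_flip_invariant_risk_bound (n : ℕ) (B : Finset (Fin n)) (p : Fin n)
    (hp : p ∈ B) (X' : Finset (Fin n → Fin 2))
    (hclosed : ∀ x ∈ X', Function.update x p (1 - x p) ∈ X')
    (h : (Fin n → Fin 2) → ℝ) (δ : ℝ) (hδ2 : δ ≤ 2)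
    (hδ : ∀ x ∈ X', x p = 0 → |h x - h (Function.update x p (1 - x p))| ≤ δ) :
    (X'.card : ℝ) * (1 - δ / 2) ^ 2 ≤
      ∑ x ∈ X', (max 0 (1 - (∏ i ∈ B, (-1 : ℝ) ^ (x i : ℕ)) * h x)) ^ 2 ∧
    ((X'.card : ℝ) / 2 ^ n) * (1 - δ / 2) ^ 2 ≤
      (∑ x : Fin n → Fin 2,
        (max 0 (1 - (∏ i ∈ B, (-1 : ℝ) ^ (x i : ℕ)) * h x)) ^ 2) / 2 ^ n := by
  have h01 : ∀ a : Fin 2, a = 0 ∨ a = 1 := by decide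
  set σ : (Fin n → Fin 2) → (Fin n → Fin 2) := fun x => Function.update x p (1 - x p) with hσ
  set fB : (Fin n → Fin 2) → ℝ := fun x => ∏ i ∈ B, (-1 : ℝ) ^ (x i : ℕ) with hfB
  set L : (Fin n → Fin 2) → ℝ := fun x => (max 0 (1 - fB x * h x)) ^ 2 with hL
  have hL0 : ∀ x, 0 ≤ L x := fun x => sq_nonneg _
  -- σ is an involution
  have hσp : ∀ x, σ x p = 1 - x p := fun x => Function.update_self _ _ _
  have hσσ : ∀ x, σ (σ x) = x := by
    intro x
    funext i
    by_cases hi : i = p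
    · subst hi
      simp only [hσ, Function.update_self]
      rcases h01 (x i) with hxp | hxp <;> rw [hxp] <;> rfl
    · simp [hσ, Function.update_of_ne hi]
  -- parity flips sign
  have habs : ∀ x, |fB x| = 1 := by
    intro x
    rw [hfB]
    simp only [Finset.abs_prod]
    rw [Finset.prod_eq_one]
    intro i _
    rw [abs_pow, abs_neg, abs_one, one_pow]
  have hsign : ∀ x, fB (σ x) = - fB x := by
    intro x
    rw [hfB]
    simp only
    rw [← Finset.mul_prod_erase _ _ hp, ← Finset.mul_prod_erase _ (fun i => (-1:ℝ)^(x i : ℕ)) hp]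
    have h1 : ∀ i ∈ B.erase p, (-1:ℝ) ^ ((σ x i : ℕ)) = (-1) ^ ((x i : ℕ)) := by
      intro i hi
      rw [hσ]
      simp [Function.update_of_ne (Finset.mem_erase.mp hi).1]
    rw [Finset.prod_congr rfl h1, hσp]
    rcases h01 (x p) with hxp | hxp <;> rw [hxp] <;> norm_num
  -- split X'
  set X0 := X'.filter (fun x => x p = 0) with hX0
  set X1 := X'.filter (fun x => x p = 1) with hX1
  have hdisj : Disjoint X0 X1 := by
    rw [Finset.disjoint_filter]
    intro x _ h0 h1
    rw [h0] at h1; exact absurd h1 (by decide)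
  have hunion : X0 ∪ X1 = X' := by
    rw [hX0, hX1, ← Finset.filter_or]
    apply Finset.filter_true_of_mem
    intro x _
    exact h01 (x p)
  -- σ maps X0 bijectively onto X1
  have hmaps : ∀ x ∈ X0, σ x ∈ X1 := by
    intro x hx
    rw [hX0, Finset.mem_filter] at hx
    rw [hX1, Finset.mem_filter]
    refine ⟨hclosed x hx.1, ?_⟩
    rw [hσp, hx.2]; rfl
  have himg : X0.image σ = X1 := by
    apply Finset.Subset.antisymm
    · intro y hy
      rw [Finset.mem_image] at hy
      obtain ⟨x, hx, rfl⟩ := hy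
      exact hmaps x hx
    · intro y hy
      rw [Finset.mem_image]
      refine ⟨σ y, ?_, hσσ y⟩
      rw [hX1, Finset.mem_filter] at hy
      rw [hX0, Finset.mem_filter]
      refine ⟨hclosed y hy.1, ?_⟩
      rw [hσp, hy.2]; rfl
  have hinj : Set.InjOn σ X0 := by
    intro a _ b _ hab
    have := congrArg σ hab
    rwa [hσσ, hσσ] at this
  have hsum1 : ∑ x ∈ X1, L x = ∑ x ∈ X0, L (σ x) := by
    rw [← himg, Finset.sum_image (fun a ha b hb => hinj ha hb)]
  have hcard : (X'.card : ℝ) = 2 * X0.card := by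
    rw [← hunion, Finset.card_union_of_disjoint hdisj, ← himg,
      Finset.card_image_of_injOn hinj]
    push_cast; ring
  -- main per-pair bound
  have hpair : ∀ x ∈ X0, 2 * (1 - δ / 2) ^ 2 ≤ L x + L (σ x) := by
    intro x hx
    rw [hX0, Finset.mem_filter] at hx
    have hd := hδ x hx.1 hx.2
    have hs := hsign x
    have ha := habs x
    set s := fB x
    have hδ' : |s * h x - s * h (σ x)| ≤ δ := by
      rw [← mul_sub, abs_mul, ha, one_mul]; exact hd
    have := pair_lb (s * h x) (s * h (σ x)) δ hδ2 hδ'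
    rw [hL]
    simp only
    rw [hs]
    calc 2 * (1 - δ / 2) ^ 2 ≤ (max 0 (1 - s * h x)) ^ 2 + (max 0 (1 + s * h (σ x))) ^ 2 := this
      _ = (max 0 (1 - s * h x)) ^ 2 + (max 0 (1 - (-s) * h (σ x))) ^ 2 := by ring_nf
  have hmain : (X'.card : ℝ) * (1 - δ / 2) ^ 2 ≤ ∑ x ∈ X', L x := by
    have heq : ∑ x ∈ X', L x = ∑ x ∈ X0, (L x + L (σ x)) := by
      rw [← hunion, Finset.sum_union hdisj, hsum1, ← Finset.sum_add_distrib]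
    rw [heq, hcard]
    calc 2 * (X0.card:ℝ) * (1 - δ / 2) ^ 2 = ∑ _x ∈ X0, 2 * (1 - δ / 2) ^ 2 := by
          rw [Finset.sum_const, nsmul_eq_mul]; ring
      _ ≤ ∑ x ∈ X0, (L x + L (σ x)) := Finset.sum_le_sum hpair
  refine ⟨hmain, ?_⟩
  have hsub : ∑ x ∈ X', L x ≤ ∑ x : Fin n → Fin 2, L x :=
    Finset.sum_le_sum_of_subset_of_nonneg (Finset.subset_univ _) (fun x _ _ => hL0 x)
  have h2n : (0:ℝ) < 2 ^ n := by positivity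
  rw [div_mul_eq_mul_div, div_le_div_iff_of_pos_right h2n]
  exact hmain.trans hsub
end
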